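/- arXiv:1602.04623 — 2 statements merged into one kernel-verified Lean document; each statement's English description precedes it below -/
import Mathlib

section
/- If a graph G has an effective competition cover, then k(G) = θ_e(G) − |V(G)| + p(G). -/
/-- A digraph (given by its arc relation) is acyclic if it has no directed cycle. -/
def Digraph.Acyclic {W : Type*} (A : W → W → Prop) : Prop :=
  ∀ v, ¬ Relation.TransGen A v v

/-- The competition graph of a digraph: distinct `x`, `y` are adjacent iff
they have a common out-neighbor. -/
def competitionGraph {W : Type*} (A : W → W → Prop) : SimpleGraph W where
  Adj x y := x ≠ y ∧ ∃ z, A x z ∧ A y z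
  symm := by
    constructor
    rintro x y ⟨h, z, hx, hy⟩
    exact ⟨h.symm, z, hy, hx⟩
  loopless := by
    constructor
    rintro x ⟨h, -⟩
    exact h rfl

/-- `G` together with `k` additional isolated vertices. -/
def addIsolated {V : Type*} (G : SimpleGraph V) (k : ℕ) : SimpleGraph (V ⊕ Fin k) where
  Adj x y := ∃ u v, G.Adj u v ∧ x = Sum.inl u ∧ y = Sum.inl v
  symm := by
    constructor
    rintro x y ⟨u, v, h, rfl, rfl⟩
    exact ⟨v, u, h.symm, rfl, rfl⟩
  loopless := by
    constructor
    rintro x ⟨u, v, h, rfl, hy⟩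
    exact G.irrefl (Sum.inl.inj hy ▸ h)

/-- `F` is an edge clique cover of `G`. -/
def IsEdgeCliqueCover {V : Type*} (G : SimpleGraph V) (F : Finset (Set V)) : Prop :=
  (∀ C ∈ F, G.IsClique C) ∧ ∀ u v, G.Adj u v → ∃ C ∈ F, u ∈ C ∧ v ∈ C

/-- The edge clique cover number `θ_e(G)`. -/
noncomputable def eccNumber {V : Type*} (G : SimpleGraph V) : ℕ :=
  sInf {n | ∃ F : Finset (Set V), IsEdgeCliqueCover G F ∧ F.card = n}

/-- An acyclic digraph `A` on `V ⊕ Fin k` realizes `G` with `k` added isolated vertices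
if its competition graph is `G` together with `k` isolated vertices. -/
def Realizes {V : Type*} (G : SimpleGraph V) (k : ℕ)
    (A : (V ⊕ Fin k) → (V ⊕ Fin k) → Prop) : Prop :=
  Digraph.Acyclic A ∧ competitionGraph A = addIsolated G k

/-- The competition number `k(G)`. -/
noncomputable def compNumber {V : Type*} (G : SimpleGraph V) : ℕ :=
  sInf {k | ∃ A : (V ⊕ Fin k) → (V ⊕ Fin k) → Prop, Realizes G k A}

/-- The primary predator index `p(G)`: the maximum number of in-degree-0 vertices over
all acyclic digraphs whose competition graph is `G` plus `k(G)` isolated vertices. -/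
noncomputable def predatorIndex {V : Type*} (G : SimpleGraph V) : ℕ :=
  sSup {n | ∃ A : (V ⊕ Fin (compNumber G)) → (V ⊕ Fin (compNumber G)) → Prop,
    Realizes G (compNumber G) A ∧ {v | ∀ u, ¬ A u v}.ncard = n}

/-- `C` is a maximal clique of `G`. -/
def IsMaximalClique {V : Type*} (G : SimpleGraph V) (C : Set V) : Prop :=
  G.IsClique C ∧ ∀ D : Set V, G.IsClique D → C ⊆ D → C = D

/-- The acyclic digraph `A` accompanies the minimum edge clique cover `𝒞`. -/
def Accompanies {V : Type*} (G : SimpleGraph V) (𝒞 : Finset (Set V))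
    (A : (V ⊕ Fin (compNumber G)) → (V ⊕ Fin (compNumber G)) → Prop) : Prop :=
  Realizes G (compNumber G) A ∧
  ∃ w : 𝒞 → (V ⊕ Fin (compNumber G)), Function.Injective w ∧
    (∀ C : 𝒞, ∀ v ∈ (C : Set V), A (Sum.inl v) (w C)) ∧
    {x | ∃ u, A u x} = Set.range w

/-- `𝒞` is an effective competition cover of `G`. -/
def IsEffectiveCompetitionCover {V : Type*} (G : SimpleGraph V) (𝒞 : Finset (Set V)) : Prop :=
  IsEdgeCliqueCover G 𝒞 ∧ 𝒞.card = eccNumber G ∧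
  (∀ C ∈ 𝒞, IsMaximalClique G C) ∧
  ∃ A : (V ⊕ Fin (compNumber G)) → (V ⊕ Fin (compNumber G)) → Prop, Accompanies G 𝒞 A

/-- The diamond graph: `K₄` minus the edge between vertices `2` and `3`. -/
def diamondGraph : SimpleGraph (Fin 4) where
  Adj i j := i ≠ j ∧ ¬(i = 2 ∧ j = 3) ∧ ¬(i = 3 ∧ j = 2)
  symm := by
    constructor
    rintro i j ⟨h, h1, h2⟩
    exact ⟨h.symm, fun ⟨a, b⟩ => h2 ⟨b, a⟩, fun ⟨a, b⟩ => h1 ⟨b, a⟩⟩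
  loopless := by
    constructor
    rintro i ⟨h, -⟩
    exact h rfl

/-- `G` contains `H` as an induced subgraph. -/
def ContainsInduced {V W : Type*} (G : SimpleGraph V) (H : SimpleGraph W) : Prop :=
  ∃ f : W ↪ V, ∀ a b, G.Adj (f a) (f b) ↔ H.Adj a b

/-- `G` is diamond-free: it has no induced diamond. -/
def DiamondFree {V : Type*} (G : SimpleGraph V) : Prop :=
  ¬ ContainsInduced G diamondGraph

/-- `G` is chordal: it has no induced cycle of length at least `4`. -/
def Chordal {V : Type*} (G : SimpleGraph V) : Prop :=
  ∀ n, 4 ≤ n → ¬ ContainsInduced G (SimpleGraph.cycleGraph n)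

/-- The edge `uv` is occupied by `C`: `C` is the unique maximal clique covering `uv`. -/
def Occupies {V : Type*} (G : SimpleGraph V) (C : Set V) (u v : V) : Prop :=
  G.Adj u v ∧ IsMaximalClique G C ∧ u ∈ C ∧ v ∈ C ∧
    ∀ C' : Set V, IsMaximalClique G C' → u ∈ C' → v ∈ C' → C' = C

/-- if `G` has an effective competition cover then
`k(G) = θ_e(G) − |V(G)| + p(G)`. -/
theorem stmt14 {V : Type*} [Fintype V] (G : SimpleGraph V)
    (h : ∃ 𝒞 : Finset (Set V), IsEffectiveCompetitionCover G 𝒞) :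
    (compNumber G : ℤ) = (eccNumber G : ℤ) - (Fintype.card V : ℤ) + (predatorIndex G : ℤ) := by
  classical
  obtain ⟨𝒞, hecc, hcard, hmax, A0, hreal0, w, hwinj, hwarc, hwrange⟩ := h
  have hNcard : Fintype.card (V ⊕ Fin (compNumber G)) = Fintype.card V + compNumber G := by
    simp [Fintype.card_sum]
  -- Upper bound: any realizing digraph has at most N - θ_e in-degree-0 vertices.
  have hub : ∀ A : (V ⊕ Fin (compNumber G)) → (V ⊕ Fin (compNumber G)) → Prop,
      Realizes G (compNumber G) A →
      {v | ∀ u, ¬ A u v}.ncard ≤ Fintype.card (V ⊕ Fin (compNumber G)) - eccNumber G := by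
    intro A hA
    set S : Set (V ⊕ Fin (compNumber G)) := {x | ∃ u, A u x} with hS
    have hcompl : {v | ∀ u, ¬ A u v} = Sᶜ := by
      ext x; simp [hS]
    have hF : IsEdgeCliqueCover G (S.toFinset.image (fun z => {v : V | A (Sum.inl v) z})) := by
      constructor
      · intro C hC
        simp only [Finset.mem_image, Set.mem_toFinset] at hC
        obtain ⟨z, hz, rfl⟩ := hC
        intro u hu v hv huv
        have hadj : (competitionGraph A).Adj (Sum.inl u) (Sum.inl v) :=
          ⟨fun e => huv (Sum.inl.inj e), z, hu, hv⟩
        rw [hA.2] at hadj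
        obtain ⟨a, b, hab, ha, hb⟩ := hadj
        cases Sum.inl.inj ha
        cases Sum.inl.inj hb
        exact hab
      · intro u v huv
        have hadj : (competitionGraph A).Adj (Sum.inl u) (Sum.inl v) := by
          rw [hA.2]; exact ⟨u, v, huv, rfl, rfl⟩
        obtain ⟨-, z, hu, hv⟩ := hadj
        refine ⟨_, Finset.mem_image_of_mem _ ?_, hu, hv⟩
        exact Set.mem_toFinset.2 ⟨_, hu⟩
    have hθ : eccNumber G ≤ S.ncard := by
      calc eccNumber G ≤ (S.toFinset.image (fun z => {v : V | A (Sum.inl v) z})).card :=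
            Nat.sInf_le ⟨_, hF, rfl⟩
        _ ≤ S.toFinset.card := Finset.card_image_le
        _ = S.ncard := (Set.ncard_eq_toFinset_card' S).symm
    have htot : S.ncard + Sᶜ.ncard = Fintype.card (V ⊕ Fin (compNumber G)) := by
      rw [Set.ncard_add_ncard_compl, Nat.card_eq_fintype_card]
    rw [hcompl]
    omega
  -- The accompanying digraph attains exactly N - θ_e in-degree-0 vertices.
  have hrange : (Set.range w).ncard = eccNumber G := by
    rw [← Nat.card_coe_set_eq, Nat.card_range_of_injective hwinj,
      Nat.card_eq_fintype_card, Fintype.card_coe, hcard]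
  have htot0 : (Set.range w).ncard + (Set.range w)ᶜ.ncard
      = Fintype.card (V ⊕ Fin (compNumber G)) := by
    rw [Set.ncard_add_ncard_compl, Nat.card_eq_fintype_card]
  have hmem : {v | ∀ u, ¬ A0 u v}.ncard
      = Fintype.card (V ⊕ Fin (compNumber G)) - eccNumber G := by
    have hcompl : {v | ∀ u, ¬ A0 u v} = {x | ∃ u, A0 u x}ᶜ := by ext x; simp
    rw [hcompl, hwrange]
    omega
  have hθN : eccNumber G ≤ Fintype.card (V ⊕ Fin (compNumber G)) := by omega
  -- Evaluate the predator index.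
  have hp : predatorIndex G = Fintype.card (V ⊕ Fin (compNumber G)) - eccNumber G := by
    unfold predatorIndex
    apply le_antisymm
    · refine csSup_le ⟨_, ⟨A0, hreal0, hmem⟩⟩ ?_
      rintro n ⟨A, hA, rfl⟩
      exact hub A hA
    · apply le_csSup
      · refine ⟨Fintype.card (V ⊕ Fin (compNumber G)) - eccNumber G, ?_⟩
        rintro n ⟨A, hA, rfl⟩
        exact hub A hA
      · exact ⟨A0, hreal0, hmem⟩
  omega
end

section
/- Let G be a graph with at least one edge whose set 𝒞 of all maximal cliques has the property that every clique in 𝒞 occupies some edge. Then k(G) = θ_e(G) − |V(G)| + p(G). -/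
namespace S16
open Sum Classical

variable {V : Type*} [Fintype V]

lemma exists_maximal_clique_superset (G : SimpleGraph V) {K : Set V} (hK : G.IsClique K) :
    ∃ D, IsMaximalClique G D ∧ K ⊆ D := by
  classical
  set P : Finset (Finset V) :=
    Finset.univ.filter (fun D => G.IsClique (D : Set V) ∧ K ⊆ (D : Set V)) with hP
  have hKP : (Set.toFinite K).toFinset ∈ P := by
    simp only [hP, Finset.mem_filter, Finset.mem_univ, true_and, Set.Finite.coe_toFinset]
    exact ⟨hK, le_refl _⟩
  obtain ⟨D, hDP, hmax⟩ := P.exists_max_image (fun D => D.card) ⟨_, hKP⟩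
  simp only [hP, Finset.mem_filter, Finset.mem_univ, true_and] at hDP
  refine ⟨(D : Set V), ⟨hDP.1, ?_⟩, hDP.2⟩
  intro E hE hDE
  have hEP : (Set.toFinite E).toFinset ∈ P := by
    simp only [hP, Finset.mem_filter, Finset.mem_univ, true_and, Set.Finite.coe_toFinset]
    exact ⟨hE, hDP.2.trans hDE⟩
  have h1 : D ⊆ (Set.toFinite E).toFinset := by
    intro x hx
    simp only [Set.Finite.mem_toFinset]
    exact hDE hx
  have h2 := Finset.eq_of_subset_of_card_le h1 (hmax _ hEP)
  calc (D : Set V) = ((Set.toFinite E).toFinset : Set V) := by rw [h2]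
  _ = E := Set.Finite.coe_toFinset _

lemma exists_maximal_clique_edge (G : SimpleGraph V) {a b : V} (hab : G.Adj a b) :
    ∃ C, IsMaximalClique G C ∧ a ∈ C ∧ b ∈ C := by
  obtain ⟨D, hD, hsub⟩ := exists_maximal_clique_superset G
    (SimpleGraph.isClique_pair.mpr (fun _ => hab))
  exact ⟨D, hD, hsub (by simp), hsub (by simp)⟩

lemma addIso_inl_inl {G : SimpleGraph V} {k : ℕ} {a b : V} :
    (addIsolated G k).Adj (Sum.inl a) (Sum.inl b) ↔ G.Adj a b := by
  constructor
  · rintro ⟨u, v, h, hu, hv⟩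
    rw [Sum.inl.injEq] at hu hv
    rwa [hu, hv]
  · intro h
    exact ⟨a, b, h, rfl, rfl⟩

end S16


namespace S16
set_option linter.unusedSectionVars false
open Sum Classical

variable {V : Type*} [Fintype V]

section Realization

variable {G : SimpleGraph V} {k : ℕ} {A : (V ⊕ Fin k) → (V ⊕ Fin k) → Prop}

lemma comp_adj_iff (hA : Realizes G k A) (x y : V ⊕ Fin k) :
    (competitionGraph A).Adj x y ↔ (addIsolated G k).Adj x y := by rw [hA.2]

lemma real_commonprey (hA : Realizes G k A) {a b : V} (hab : G.Adj a b) :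
    ∃ z, A (Sum.inl a) z ∧ A (Sum.inl b) z := by
  have h : (competitionGraph A).Adj (Sum.inl a) (Sum.inl b) :=
    (comp_adj_iff hA _ _).mpr (addIso_inl_inl.mpr hab)
  exact h.2

lemma real_adj_of_prey (hA : Realizes G k A) {u v : V} {z : V ⊕ Fin k}
    (hu : A (Sum.inl u) z) (hv : A (Sum.inl v) z) (huv : u ≠ v) : G.Adj u v := by
  have h : (competitionGraph A).Adj (Sum.inl u) (Sum.inl v) :=
    ⟨fun h => huv (Sum.inl.inj h), z, hu, hv⟩
  exact addIso_inl_inl.mp ((comp_adj_iff hA _ _).mp h)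

end Realization

section Construction

variable (G : SimpleGraph V) {k : ℕ} (A : (V ⊕ Fin k) → (V ⊕ Fin k) → Prop)

/-- Choice of a maximal clique extending a clique. -/
noncomputable def maxExt (K : Set V) : Set V :=
  if h : G.IsClique K then (exists_maximal_clique_superset G h).choose else ∅

lemma maxExt_max {K : Set V} (h : G.IsClique K) : IsMaximalClique G (maxExt G K) := by
  rw [maxExt, dif_pos h]
  exact (exists_maximal_clique_superset G h).choose_spec.1

lemma maxExt_sub {K : Set V} (h : G.IsClique K) : K ⊆ maxExt G K := by
  rw [maxExt, dif_pos h]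
  exact (exists_maximal_clique_superset G h).choose_spec.2

lemma maxExt_eq_of_occ {C : Set V} {u v : V} (hC : Occupies G C u v) {K : Set V}
    (hK : G.IsClique K) (hu : u ∈ K) (hv : v ∈ K) : maxExt G K = C :=
  hC.2.2.2.2 (maxExt G K) (maxExt_max G hK) (maxExt_sub G hK hu) (maxExt_sub G hK hv)

/-- In-neighborhood (within `V`) of a vertex. -/
def InN (z : V ⊕ Fin k) : Set V := {v | A (Sum.inl v) z}

/-- Depth measure from acyclicity. -/
noncomputable def fdep (x : V ⊕ Fin k) : ℕ := {z | Relation.TransGen A z x}.ncard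

/-- Common prey set of a pair. -/
def CP (a b : V) : Set (V ⊕ Fin k) := {z | A (Sum.inl a) z ∧ A (Sum.inl b) z}

noncomputable def pickCP [Nonempty V] (a b : V) : V ⊕ Fin k :=
  if h : (CP A a b).Nonempty then h.some else Sum.inl (Classical.arbitrary V)

/-- Canonical maximal clique assigned to an edge. -/
noncomputable def Med [Nonempty V] (a b : V) : Set V := maxExt G (InN A (pickCP A a b))

/-- The pool of preys canonically routed to `C`. -/
def Zs (C : Set V) : Set (V ⊕ Fin k) :=
  {z | (∃ a b, G.Adj a b ∧ A (Sum.inl a) z ∧ A (Sum.inl b) z) ∧ maxExt G (InN A z) = C}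

/-- The chosen prey vertex for clique `C`: a deepest element of the pool. -/
noncomputable def wC [Nonempty V] (C : Set V) : V ⊕ Fin k :=
  if h : (Zs G A C).Nonempty then
    (Set.exists_max_image (Zs G A C) (fdep A) (Set.toFinite _) h).choose
  else Sum.inl (Classical.arbitrary V)

/-- Which vertices point at `wC C` in the new digraph. -/
def SC [Nonempty V] (C : Set V) : Set V := {v | ∃ b, G.Adj v b ∧ Med G A v b = C}

/-- The rebuilt digraph. -/
def Anew [Nonempty V] (x y : V ⊕ Fin k) : Prop :=
  ∃ C, IsMaximalClique G C ∧ y = wC G A C ∧ ∃ v, x = Sum.inl v ∧ v ∈ SC G A C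

end Construction

section ConstructionLemmas

variable {G : SimpleGraph V} {k : ℕ} {A : (V ⊕ Fin k) → (V ⊕ Fin k) → Prop} [Nonempty V]

lemma InN_clique (hA : Realizes G k A) (z : V ⊕ Fin k) : G.IsClique (InN A z) :=
  fun u hu v hv huv => real_adj_of_prey hA hu hv huv

lemma fdep_lt (hA : Realizes G k A) {x y : V ⊕ Fin k} (h : A x y) : fdep A x < fdep A y := by
  apply Set.ncard_lt_ncard ?_ (Set.toFinite _)
  rw [Set.ssubset_def]
  constructor
  · intro z hz
    exact Relation.TransGen.tail hz h
  · intro hsub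
    exact hA.1 x (hsub (Relation.TransGen.single h))

lemma CP_comm (a b : V) : CP A a b = CP A b a := by
  ext z; exact and_comm

lemma pickCP_comm (a b : V) : pickCP A a b = pickCP A b a := by
  rw [pickCP, pickCP, CP_comm]

lemma Med_comm (a b : V) : Med G A a b = Med G A b a := by
  rw [Med, Med, pickCP_comm]

lemma pickCP_mem (hA : Realizes G k A) {a b : V} (hab : G.Adj a b) :
    pickCP A a b ∈ CP A a b := by
  have hne : (CP A a b).Nonempty := real_commonprey hA hab
  rw [pickCP, dif_pos hne]
  exact hne.some_mem

lemma wC_spec {C : Set V} (h : (Zs G A C).Nonempty) :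
    wC G A C ∈ Zs G A C ∧ ∀ z ∈ Zs G A C, fdep A z ≤ fdep A (wC G A C) := by
  rw [wC, dif_pos h]
  obtain ⟨h1, h2⟩ := (Set.exists_max_image (Zs G A C) (fdep A) (Set.toFinite _) h).choose_spec
  exact ⟨h1, h2⟩

lemma Med_eq_of_occ (hA : Realizes G k A) {C : Set V} {u v : V} (hC : Occupies G C u v) :
    Med G A u v = C := by
  have hz := pickCP_mem hA hC.1
  exact maxExt_eq_of_occ G hC (InN_clique hA _) hz.1 hz.2

lemma mem_Zs_of_SC (hA : Realizes G k A) {C : Set V} {v : V} (hv : v ∈ SC G A C) :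
    ∃ z ∈ Zs G A C, A (Sum.inl v) z := by
  obtain ⟨b, hadj, hM⟩ := hv
  have hz := pickCP_mem hA hadj
  exact ⟨pickCP A v b, ⟨⟨v, b, hadj, hz.1, hz.2⟩, hM⟩, hz.1⟩

lemma SC_sub (hA : Realizes G k A) {C : Set V} : SC G A C ⊆ C := by
  rintro v ⟨b, hadj, hM⟩
  have hz := pickCP_mem hA hadj
  have h2 : InN A (pickCP A v b) ⊆ C := by
    rw [← hM]; exact maxExt_sub G (InN_clique hA _)
  exact h2 hz.1

lemma Anew_lt (hA : Realizes G k A) {x y : V ⊕ Fin k} (h : Anew G A x y) :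
    fdep A x < fdep A y := by
  obtain ⟨C, hCmax, rfl, v, rfl, hv⟩ := h
  obtain ⟨z, hzZ, hvz⟩ := mem_Zs_of_SC hA hv
  have h1 : fdep A (Sum.inl v) < fdep A z := fdep_lt hA hvz
  have h2 : fdep A z ≤ fdep A (wC G A C) := (wC_spec ⟨z, hzZ⟩).2 z hzZ
  omega

lemma Anew_acyclic (hA : Realizes G k A) : Digraph.Acyclic (Anew G A) := by
  intro x hx
  have key : ∀ x y, Relation.TransGen (Anew G A) x y → fdep A x < fdep A y := by
    intro x y h
    induction h with
    | single h => exact Anew_lt hA h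
    | tail _ h ih => exact ih.trans (Anew_lt hA h)
  exact lt_irrefl _ (key x x hx)

lemma wC_max_eq (hA : Realizes G k A) {C : Set V} (h : (Zs G A C).Nonempty) :
    maxExt G (InN A (wC G A C)) = C := ((wC_spec h).1).2

lemma Anew_comp (hA : Realizes G k A) : competitionGraph (Anew G A) = addIsolated G k := by
  apply SimpleGraph.ext
  ext x y
  constructor
  · rintro ⟨hne, z, ⟨C1, hC1, rfl, u, rfl, hu⟩, ⟨C2, hC2, hz2, v, rfl, hv⟩⟩
    have hC12 : C1 = C2 := by
      obtain ⟨z1, hz1, -⟩ := mem_Zs_of_SC hA hu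
      obtain ⟨z2, hz2', -⟩ := mem_Zs_of_SC hA hv
      rw [← wC_max_eq hA ⟨z1, hz1⟩, ← wC_max_eq hA ⟨z2, hz2'⟩, hz2]
    subst hC12
    have huv : u ≠ v := fun h => hne (by rw [h])
    exact ⟨u, v, hC1.1 (SC_sub hA hu) (SC_sub hA hv) huv, rfl, rfl⟩
  · rintro ⟨u, v, huv, rfl, rfl⟩
    have hclique := InN_clique hA (pickCP A u v)
    have hCmax : IsMaximalClique G (Med G A u v) := maxExt_max G hclique
    refine ⟨fun h => G.irrefl (Sum.inl.inj h ▸ huv), wC G A (Med G A u v),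
      ⟨Med G A u v, hCmax, rfl, u, rfl, v, huv, rfl⟩,
      ⟨Med G A u v, hCmax, rfl, v, rfl, u, huv.symm, Med_comm v u⟩⟩

lemma Anew_realizes (hA : Realizes G k A) : Realizes G k (Anew G A) :=
  ⟨Anew_acyclic hA, Anew_comp hA⟩

lemma Anew_nonsources (hA : Realizes G k A)
    (hocc : ∀ C : Set V, IsMaximalClique G C → ∃ u v : V, Occupies G C u v) :
    {x | ∃ u, Anew G A u x} = wC G A '' {C | IsMaximalClique G C} := by
  ext x
  constructor
  · rintro ⟨u, C, hC, rfl, -⟩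
    exact ⟨C, hC, rfl⟩
  · rintro ⟨C, hC, rfl⟩
    obtain ⟨u, v, hocc'⟩ := hocc C hC
    have hu : u ∈ SC G A C := ⟨v, hocc'.1, Med_eq_of_occ hA hocc'⟩
    exact ⟨Sum.inl u, C, hC, rfl, u, rfl, hu⟩

lemma wC_injOn (hA : Realizes G k A)
    (hocc : ∀ C : Set V, IsMaximalClique G C → ∃ u v : V, Occupies G C u v) :
    Set.InjOn (wC G A) {C | IsMaximalClique G C} := by
  intro C1 hC1 C2 hC2 heq
  have hne : ∀ C, IsMaximalClique G C → (Zs G A C).Nonempty := by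
    intro C hC
    obtain ⟨u, v, hocc'⟩ := hocc C hC
    have hz := pickCP_mem hA hocc'.1
    exact ⟨pickCP A u v, ⟨u, v, hocc'.1, hz.1, hz.2⟩,
      maxExt_eq_of_occ G hocc' (InN_clique hA _) hz.1 hz.2⟩
  rw [← wC_max_eq hA (hne C1 hC1), ← wC_max_eq hA (hne C2 hC2), heq]

end ConstructionLemmas

end S16


namespace S16
set_option linter.unusedSectionVars false
set_option linter.unusedVariables false
open Sum Classical

variable {V : Type*} [Fintype V] {G : SimpleGraph V}

/-- The finset of maximal cliques. -/
noncomputable def MCFin (G : SimpleGraph V) : Finset (Set V) :=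
  (Set.toFinite {C : Set V | IsMaximalClique G C}).toFinset

lemma mem_MCFin {C : Set V} : C ∈ MCFin G ↔ IsMaximalClique G C :=
  Set.Finite.mem_toFinset _

lemma MC_ecc : IsEdgeCliqueCover G (MCFin G) := by
  constructor
  · exact fun C hC => (mem_MCFin.mp hC).1
  · intro u v huv
    obtain ⟨C, hC, hu, hv⟩ := exists_maximal_clique_edge G huv
    exact ⟨C, mem_MCFin.mpr hC, hu, hv⟩

noncomputable def repK (G : SimpleGraph V) (F0 : Finset (Set V)) (C : Set V) : Set V :=
  if h : ∃ K, K ∈ F0 ∧ ∃ u v, Occupies G C u v ∧ u ∈ K ∧ v ∈ K then h.choose else ∅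

lemma card_le_of_ecc (hocc : ∀ C : Set V, IsMaximalClique G C → ∃ u v : V, Occupies G C u v)
    {F0 : Finset (Set V)} (hF0 : IsEdgeCliqueCover G F0) :
    (MCFin G).card ≤ F0.card := by
  have hspec : ∀ C ∈ MCFin G, repK G F0 C ∈ F0 ∧
      ∃ u v, Occupies G C u v ∧ u ∈ repK G F0 C ∧ v ∈ repK G F0 C := by
    intro C hC
    obtain ⟨u, v, hocc'⟩ := hocc C (mem_MCFin.mp hC)
    obtain ⟨K, hKF, hu, hv⟩ := hF0.2 u v hocc'.1
    have h : ∃ K, K ∈ F0 ∧ ∃ u v, Occupies G C u v ∧ u ∈ K ∧ v ∈ K :=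
      ⟨K, hKF, u, v, hocc', hu, hv⟩
    rw [repK, dif_pos h]
    obtain ⟨h1, u', v', h2, h3, h4⟩ := h.choose_spec
    exact ⟨h1, u', v', h2, h3, h4⟩
  apply Finset.card_le_card_of_injOn (repK G F0) (fun C hC => (hspec C hC).1)
  intro C1 hC1 C2 hC2 heq
  simp only [Finset.mem_coe] at hC1 hC2
  obtain ⟨hK1, u1, v1, hocc1, hu1, hv1⟩ := hspec C1 hC1
  obtain ⟨hK2, u2, v2, hocc2, hu2, hv2⟩ := hspec C2 hC2
  rw [heq] at hu1 hv1
  have hKcl : G.IsClique (repK G F0 C2) := hF0.1 _ hK2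
  have e1 : maxExt G (repK G F0 C2) = C1 := maxExt_eq_of_occ G hocc1 hKcl hu1 hv1
  have e2 : maxExt G (repK G F0 C2) = C2 := maxExt_eq_of_occ G hocc2 hKcl hu2 hv2
  rw [← e1, e2]

lemma ecc_eq_card (hocc : ∀ C : Set V, IsMaximalClique G C → ∃ u v : V, Occupies G C u v) :
    eccNumber G = (MCFin G).card := by
  have h1 : eccNumber G ≤ (MCFin G).card := Nat.sInf_le ⟨MCFin G, MC_ecc, rfl⟩
  have h2 : eccNumber G ∈ {n | ∃ F : Finset (Set V), IsEdgeCliqueCover G F ∧ F.card = n} :=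
    Nat.sInf_mem ⟨(MCFin G).card, MCFin G, MC_ecc, rfl⟩
  obtain ⟨F0, hF0, hc⟩ := h2
  have h3 := card_le_of_ecc hocc hF0
  omega

/-- The trivial realization showing `compNumber` is well-defined. -/
def baseA (G : SimpleGraph V) :
    (V ⊕ Fin (MCFin G).card) → (V ⊕ Fin (MCFin G).card) → Prop :=
  fun x y => ∃ (v : V) (i : Fin (MCFin G).card), x = Sum.inl v ∧ y = Sum.inr i ∧
    v ∈ (((MCFin G).equivFin.symm i : {x // x ∈ MCFin G}) : Set V)

lemma baseA_realizes : Realizes G (MCFin G).card (baseA G) := by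
  constructor
  · intro x hx
    have key : ∀ x y, Relation.TransGen (baseA G) x y → baseA G x y := by
      intro x y h
      induction h with
      | single h => exact h
      | tail hxb hbc ih =>
          obtain ⟨v, i, rfl, rfl, -⟩ := ih
          obtain ⟨v', j, habs, -, -⟩ := hbc
          exact absurd habs (by simp)
    obtain ⟨v, i, rfl, heq, -⟩ := key x x hx
    simp at heq
  · apply SimpleGraph.ext
    ext x y
    constructor
    · rintro ⟨hne, z, ⟨u, i, rfl, rfl, hu⟩, ⟨v, j, rfl, hj, hv⟩⟩
      have hij : i = j := Sum.inr.inj hj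
      subst hij
      have huv : u ≠ v := fun h => hne (by rw [h])
      have hCmem : (((MCFin G).equivFin.symm i : {x // x ∈ MCFin G}) : Set V) ∈ MCFin G :=
        ((MCFin G).equivFin.symm i).2
      have hcl : G.IsClique (((MCFin G).equivFin.symm i : {x // x ∈ MCFin G}) : Set V) :=
        (mem_MCFin.mp hCmem).1
      exact ⟨u, v, hcl hu hv huv, rfl, rfl⟩
    · rintro ⟨u, v, huv, rfl, rfl⟩
      obtain ⟨C, hCF, hu, hv⟩ := MC_ecc.2 u v huv
      refine ⟨fun h => G.irrefl (Sum.inl.inj h ▸ huv),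
        Sum.inr ((MCFin G).equivFin ⟨C, hCF⟩), ⟨u, _, rfl, rfl, ?_⟩, ⟨v, _, rfl, rfl, ?_⟩⟩
      · rw [Equiv.symm_apply_apply]; exact hu
      · rw [Equiv.symm_apply_apply]; exact hv

lemma ecc_le_nonsources [Nonempty V] {k : ℕ} {A : (V ⊕ Fin k) → (V ⊕ Fin k) → Prop}
    (hA : Realizes G k A) :
    eccNumber G ≤ {x | ∃ u, A u x}.ncard := by
  classical
  set NS : Set (V ⊕ Fin k) := {x | ∃ u, A u x} with hNS
  set F1 : Finset (Set V) := Finset.image (fun z => InN A z) (Set.toFinite NS).toFinset with hF1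
  have hecc : IsEdgeCliqueCover G F1 := by
    constructor
    · intro C hC
      obtain ⟨z, hz, rfl⟩ := Finset.mem_image.mp hC
      exact InN_clique hA z
    · intro u v huv
      obtain ⟨z, hu, hv⟩ := real_commonprey hA huv
      refine ⟨InN A z, Finset.mem_image_of_mem _ ?_, hu, hv⟩
      rw [Set.Finite.mem_toFinset]
      exact ⟨Sum.inl u, hu⟩
  have h1 : eccNumber G ≤ F1.card := Nat.sInf_le ⟨F1, hecc, rfl⟩
  have h2 : F1.card ≤ (Set.toFinite NS).toFinset.card := Finset.card_image_le
  have h3 : (Set.toFinite NS).toFinset.card = NS.ncard :=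
    (Set.ncard_eq_toFinset_card NS (Set.toFinite NS)).symm
  omega

end S16

/-- if every maximal clique of `G` occupies some edge, then
`k(G) = θ_e(G) − |V(G)| + p(G)`. -/
theorem stmt16 {V : Type*} [Fintype V] (G : SimpleGraph V)
    (hedge : ∃ u v : V, G.Adj u v)
    (hocc : ∀ C : Set V, IsMaximalClique G C → ∃ u v : V, Occupies G C u v) :
    (compNumber G : ℤ) = (eccNumber G : ℤ) - (Fintype.card V : ℤ) + (predatorIndex G : ℤ) := by
  classical
  open S16 in
  obtain ⟨u0, v0, huv0⟩ := hedge
  have hneV : Nonempty V := ⟨u0⟩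
  -- a realization at the competition number
  have hcompne : {k | ∃ A : (V ⊕ Fin k) → (V ⊕ Fin k) → Prop, Realizes G k A}.Nonempty :=
    ⟨(MCFin G).card, baseA G, baseA_realizes⟩
  have hreal : ∃ A : (V ⊕ Fin (compNumber G)) → (V ⊕ Fin (compNumber G)) → Prop,
      Realizes G (compNumber G) A := Nat.sInf_mem hcompne
  obtain ⟨A1, hA1⟩ := hreal
  -- the rebuilt realization with exactly `eccNumber G` non-source vertices
  have hA2 : Realizes G (compNumber G) (Anew G A1) := Anew_realizes hA1
  have hNScard : {x | ∃ u, Anew G A1 u x}.ncard = eccNumber G := by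
    rw [Anew_nonsources hA1 hocc, Set.ncard_image_of_injOn (wC_injOn hA1 hocc),
      ecc_eq_card hocc, MCFin]
    exact Set.ncard_eq_toFinset_card _ _
  -- counting sources vs non-sources
  have hcardW : Nat.card (V ⊕ Fin (compNumber G)) = Fintype.card V + compNumber G := by
    simp [Nat.card_eq_fintype_card]
  have hsplit : ∀ (A : (V ⊕ Fin (compNumber G)) → (V ⊕ Fin (compNumber G)) → Prop),
      {v | ∀ u, ¬ A u v}.ncard + {x | ∃ u, A u x}.ncard
        = Fintype.card V + compNumber G := by
    intro A
    have h1 : {v : V ⊕ Fin (compNumber G) | ∀ u, ¬ A u v} = {x | ∃ u, A u x}ᶜ := by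
      ext x
      simp [not_exists]
    rw [h1, add_comm, Set.ncard_add_ncard_compl, hcardW]
  -- the predator index set
  set pS := {n | ∃ A : (V ⊕ Fin (compNumber G)) → (V ⊕ Fin (compNumber G)) → Prop,
      Realizes G (compNumber G) A ∧ {v | ∀ u, ¬ A u v}.ncard = n} with hpS
  have hmemS : ({v | ∀ u, ¬ Anew G A1 u v}).ncard ∈ pS := ⟨Anew G A1, hA2, rfl⟩
  have hbdd : BddAbove pS := by
    refine ⟨Fintype.card V + compNumber G, ?_⟩
    rintro m ⟨A, -, rfl⟩
    have := hsplit A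
    omega
  have hpdef : predatorIndex G = sSup pS := rfl
  have hpmem : predatorIndex G ∈ pS := by
    rw [hpdef]
    exact Nat.sSup_mem ⟨_, hmemS⟩ hbdd
  obtain ⟨Ap, hAp, hpcard⟩ := hpmem
  -- easy direction: every realization's non-sources form an edge clique cover
  have heasy : eccNumber G ≤ {x | ∃ u, Ap u x}.ncard := ecc_le_nonsources hAp
  have h3 := hsplit Ap
  have h4 := hsplit (Anew G A1)
  have h5 : {v | ∀ u, ¬ Anew G A1 u v}.ncard ≤ predatorIndex G := by
    rw [hpdef]
    exact le_csSup hbdd hmemS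
  rw [hNScard] at h4
  rw [hpcard] at h3
  omega
end
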